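/- For smooth functions ψ on [-1,1], the modified Legendre differential operator L_c = d/dx[(1−x²) d/dx] − c² x² commutes with the finite Fourier transform operator F_c: for all x ∈ [-1,1], (F_c (L_c ψ))(x) = (L_c (F_c ψ))(x). -/

import Mathlib

/-- The finite Fourier transform operator `F_c` on functions on `[-1,1]`. -/
noncomputable def Fc (c : ℝ) (ψ : ℝ → ℂ) (x : ℝ) : ℂ :=
  ∫ y in (-1 : ℝ)..1, Complex.exp (Complex.I * c * x * y) * ψ y

/-- The modified Legendre differential operator
`L_c ψ = d/dx[(1−x²) ψ'] − c² x² ψ`. -/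
noncomputable def Lc (c : ℝ) (ψ : ℝ → ℂ) (x : ℝ) : ℂ :=
  deriv (fun t : ℝ => ((1 - (t : ℂ) ^ 2)) * deriv ψ t) x - (c : ℂ) ^ 2 * (x : ℂ) ^ 2 * ψ x

open MeasureTheory intervalIntegral

lemma norm_E (c x y : ℝ) : ‖Complex.exp (Complex.I * c * x * y)‖ = 1 := by
  rw [show Complex.I * (c:ℂ) * x * y = ((c*x*y:ℝ):ℂ) * Complex.I by push_cast; ring]
  exact Complex.norm_exp_ofReal_mul_I _

lemma E_hasDerivAt_x (c y : ℝ) (x : ℝ) :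
    HasDerivAt (fun x : ℝ => Complex.exp (Complex.I * c * x * y))
      (Complex.I * c * y * Complex.exp (Complex.I * c * x * y)) x := by
  have h : HasDerivAt (fun x : ℝ => Complex.I * (c:ℂ) * (x:ℂ) * (y:ℂ)) (Complex.I * c * y) x := by
    simpa using (((hasDerivAt_id x).ofReal_comp.const_mul (Complex.I * (c:ℂ))).mul_const (y:ℂ))
  simpa [mul_comm] using h.cexp

lemma E_hasDerivAt_y (c x : ℝ) (y : ℝ) :
    HasDerivAt (fun y : ℝ => Complex.exp (Complex.I * c * x * y))
      (Complex.I * c * x * Complex.exp (Complex.I * c * x * y)) y := by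
  have h : HasDerivAt (fun y : ℝ => Complex.I * (c:ℂ) * (x:ℂ) * (y:ℂ)) (Complex.I * c * x) y := by
    simpa using ((hasDerivAt_id y).ofReal_comp.const_mul (Complex.I * (c:ℂ) * (x:ℂ)))
  simpa [mul_comm] using h.cexp

lemma E_cont (c x : ℝ) : Continuous fun y : ℝ => Complex.exp (Complex.I * c * x * y) := by
  fun_prop

lemma sq_hasDerivAt (y : ℝ) :
    HasDerivAt (fun t : ℝ => 1 - (t:ℂ)^2) (-(2*(y:ℂ))) y := by
  have h : HasDerivAt (fun t : ℝ => ((t:ℝ):ℂ)) 1 y := (hasDerivAt_id y).ofReal_comp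
  have hsq : HasDerivAt (fun t : ℝ => ((t:ℂ))^2) (2*(y:ℂ)) y := by
    convert h.pow 2 using 1
    · rfl
    · rfl
    · norm_num
  simpa using hsq.const_sub 1

lemma Fc_hasDerivAt (c : ℝ) (hc : 0 < c) (f : ℝ → ℂ) (hf : Continuous f) (x : ℝ) :
    HasDerivAt (Fc c f)
      (∫ y in (-1:ℝ)..1, Complex.exp (Complex.I * c * x * y) * (Complex.I * c * y * f y)) x := by
  have key := intervalIntegral.hasDerivAt_integral_of_dominated_loc_of_deriv_le
    (F := fun (x : ℝ) (y : ℝ) => Complex.exp (Complex.I * c * x * y) * f y)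
    (F' := fun (x : ℝ) (y : ℝ) => Complex.exp (Complex.I * c * x * y) * (Complex.I * c * y * f y))
    (x₀ := x) (a := -1) (b := 1) (μ := volume) (bound := fun y => c * ‖f y‖)
    (s := Metric.ball x 1) (Metric.ball_mem_nhds x one_pos)
    (Filter.Eventually.of_forall fun x => ((E_cont c x).mul hf).aestronglyMeasurable)
    (((E_cont c x).mul hf).intervalIntegrable _ _)
    (((E_cont c x).mul (by fun_prop)).aestronglyMeasurable)
    ?_ ((continuous_const.mul hf.norm).intervalIntegrable _ _) ?_
  · exact key.2
  · refine Filter.Eventually.of_forall fun y hy x' _ => ?_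
    have hy1 : |y| ≤ 1 := by
      rw [Set.uIoc_of_le (by norm_num : (-1:ℝ) ≤ 1)] at hy
      rw [abs_le]; exact ⟨le_of_lt hy.1, hy.2⟩
    rw [norm_mul, norm_E, one_mul, norm_mul]
    have : ‖Complex.I * (c:ℂ) * (y:ℂ)‖ = c * |y| := by
      simp [map_mul, abs_of_pos hc]
    rw [this]
    show c * |y| * ‖f y‖ ≤ c * ‖f y‖
    nlinarith [norm_nonneg (f y), mul_le_of_le_one_right hc.le hy1]
  · refine Filter.Eventually.of_forall fun y hy x' _ => ?_
    have := (E_hasDerivAt_x c y x').mul_const (f y)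
    convert this using 1
    · rfl
    ring

/-- For twice continuously differentiable `ψ`, the modified Legendre differential operator `L_c`
commutes with the finite Fourier transform `F_c`:
`(F_c (L_c ψ))(x) = (L_c (F_c ψ))(x)` for all `x ∈ [-1,1]`. -/
theorem Fc_commutes_with_Lc (c : ℝ) (hc : 0 < c) (ψ : ℝ → ℂ) (hψ : ContDiff ℝ 2 ψ) :
    ∀ x ∈ Set.Icc (-1 : ℝ) 1, Fc c (Lc c ψ) x = Lc c (Fc c ψ) x := by
  intro x _
  -- regularity facts about ψ
  have hdψ : Differentiable ℝ ψ := hψ.differentiable (by norm_num)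
  have hcd1 : ContDiff ℝ 1 (deriv ψ) := by
    have h2 : ContDiff ℝ ((1:ℕ) + 1) ψ := by exact_mod_cast hψ
    exact (contDiff_succ_iff_deriv.mp h2).2.2
  have hψ'c : Continuous (deriv ψ) := hcd1.continuous
  have hdψ' : Differentiable ℝ (deriv ψ) := hcd1.differentiable one_ne_zero
  have hψ''c : Continuous (deriv (deriv ψ)) := hcd1.continuous_deriv le_rfl
  set E : ℝ → ℂ := fun y : ℝ => Complex.exp (Complex.I * c * x * y) with hE
  have hEc : Continuous E := E_cont c x
  set v' : ℝ → ℂ := fun y : ℝ =>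
    (-(2*(y:ℂ))) * deriv ψ y + (1 - (y:ℂ)^2) * deriv (deriv ψ) y with hv'
  have hv : ∀ y : ℝ, HasDerivAt (fun t : ℝ => (1 - (t:ℂ)^2) * deriv ψ t) (v' y) y := by
    intro y
    exact (sq_hasDerivAt y).mul (hasDerivAt_deriv_iff.mpr (hdψ' y))
  have hv'c : Continuous v' := by
    apply Continuous.add
    · exact ((continuous_const.mul Complex.continuous_ofReal).neg).mul hψ'c
    · exact (continuous_const.sub (Complex.continuous_ofReal.pow 2)).mul hψ''c
  have hLcψ : ∀ y : ℝ, Lc c ψ y = v' y - (c:ℂ)^2*(y:ℂ)^2*ψ y := by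
    intro y; rw [Lc, (hv y).deriv]
  -- auxiliary continuity
  have hu2'c : Continuous (fun y : ℝ =>
      Complex.I*c*x * E y * (1-(y:ℂ)^2) + E y * (-(2*(y:ℂ)))) := by
    apply Continuous.add
    · exact ((continuous_const.mul hEc).mul
        (continuous_const.sub (Complex.continuous_ofReal.pow 2)))
    · exact hEc.mul ((continuous_const.mul Complex.continuous_ofReal).neg)
  -- first integration by parts
  have ibp1 : (∫ y in (-1:ℝ)..1, E y * v' y)
      = - ∫ y in (-1:ℝ)..1, (Complex.I*c*x * E y) * ((1 - (y:ℂ)^2) * deriv ψ y) := by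
    have h := intervalIntegral.integral_mul_deriv_eq_deriv_mul
      (a := (-1:ℝ)) (b := 1)
      (u := E) (u' := fun y => Complex.I*c*x * E y)
      (v := fun y : ℝ => (1 - (y:ℂ)^2) * deriv ψ y) (v' := v')
      (fun y _ => E_hasDerivAt_y c x y)
      (fun y _ => hv y)
      ((continuous_const.mul hEc).intervalIntegrable _ _)
      (hv'c.intervalIntegrable _ _)
    rw [h]
    norm_num
  -- second integration by parts
  have ibp2 : (∫ y in (-1:ℝ)..1, (E y * (1-(y:ℂ)^2)) * deriv ψ y)
      = - ∫ y in (-1:ℝ)..1,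
          (Complex.I*c*x * E y * (1-(y:ℂ)^2) + E y * (-(2*(y:ℂ)))) * ψ y := by
    have h := intervalIntegral.integral_mul_deriv_eq_deriv_mul
      (a := (-1:ℝ)) (b := 1)
      (u := fun y : ℝ => E y * (1-(y:ℂ)^2))
      (u' := fun y : ℝ => Complex.I*c*x * E y * (1-(y:ℂ)^2) + E y * (-(2*(y:ℂ))))
      (v := ψ) (v' := deriv ψ)
      (fun y _ => (E_hasDerivAt_y c x y).mul (sq_hasDerivAt y))
      (fun y _ => hasDerivAt_deriv_iff.mpr (hdψ y))
      (hu2'c.intervalIntegrable _ _)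
      (hψ'c.intervalIntegrable _ _)
    rw [h]
    norm_num
  -- compute the left-hand side
  have hLHS : Fc c (Lc c ψ) x
      = ∫ y in (-1:ℝ)..1,
          (Complex.I*c*x *
            ((Complex.I*c*x * E y * (1-(y:ℂ)^2) + E y * (-(2*(y:ℂ)))) * ψ y)
          - E y * ((c:ℂ)^2*(y:ℂ)^2*ψ y)) := by
    have e1 : Fc c (Lc c ψ) x
        = ∫ y in (-1:ℝ)..1, (E y * v' y - E y * ((c:ℂ)^2*(y:ℂ)^2*ψ y)) := by
      rw [Fc]
      apply intervalIntegral.integral_congr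
      intro y _
      show E y * Lc c ψ y = E y * v' y - E y * ((c:ℂ)^2*(y:ℂ)^2*ψ y)
      rw [hLcψ y]
      ring
    have hint1 : IntervalIntegrable (fun y : ℝ => E y * v' y) volume (-1) 1 :=
      (hEc.mul hv'c).intervalIntegrable _ _
    have hint2 : IntervalIntegrable (fun y : ℝ => E y * ((c:ℂ)^2*(y:ℂ)^2*ψ y)) volume (-1) 1 :=
      (hEc.mul ((continuous_const.mul (Complex.continuous_ofReal.pow 2)).mul
        hψ.continuous)).intervalIntegrable _ _
    have hint3 : IntervalIntegrable (fun y : ℝ => Complex.I*c*x *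
        ((Complex.I*c*x * E y * (1-(y:ℂ)^2) + E y * (-(2*(y:ℂ)))) * ψ y)) volume (-1) 1 :=
      (continuous_const.mul (hu2'c.mul hψ.continuous)).intervalIntegrable _ _
    rw [e1, intervalIntegral.integral_sub hint1 hint2, ibp1]
    rw [show (∫ y in (-1:ℝ)..1, (Complex.I*c*x * E y) * ((1 - (y:ℂ)^2) * deriv ψ y))
        = Complex.I*c*x * ∫ y in (-1:ℝ)..1, (E y * (1-(y:ℂ)^2)) * deriv ψ y by
      rw [← intervalIntegral.integral_const_mul]
      apply intervalIntegral.integral_congr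
      intro y _
      simp only []
      ring]
    rw [ibp2, intervalIntegral.integral_sub hint3 hint2,
      intervalIntegral.integral_const_mul]
    ring
  -- compute the right-hand side
  set f₁ : ℝ → ℂ := fun y : ℝ => Complex.I*c*(y:ℂ) * ψ y with hf₁
  have hf₁c : Continuous f₁ := by
    exact ((continuous_const.mul Complex.continuous_ofReal).mul hψ.continuous)
  have hder : deriv (Fc c ψ) = Fc c f₁ := by
    funext t
    rw [(Fc_hasDerivAt c hc ψ hψ.continuous t).deriv]
    rfl
  have hgx := Fc_hasDerivAt c hc f₁ hf₁c x
  have hprod : HasDerivAt (fun t : ℝ => (1 - (t:ℂ)^2) * Fc c f₁ t)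
      ((-(2*(x:ℂ))) * Fc c f₁ x
        + (1-(x:ℂ)^2) * (∫ y in (-1:ℝ)..1, E y * (Complex.I*c*(y:ℂ) * f₁ y))) x :=
    (sq_hasDerivAt x).mul hgx
  have hRHS : Lc c (Fc c ψ) x
      = ∫ y in (-1:ℝ)..1,
          ((-(2*(x:ℂ))) * (E y * f₁ y)
            + (1-(x:ℂ)^2) * (E y * (Complex.I*c*(y:ℂ) * f₁ y))
            - (c:ℂ)^2*(x:ℂ)^2 * (E y * ψ y)) := by
    rw [Lc]
    simp only [hder]
    rw [hprod.deriv]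
    have hint1 : IntervalIntegrable (fun y : ℝ => E y * f₁ y) volume (-1) 1 :=
      (hEc.mul hf₁c).intervalIntegrable _ _
    have hint2 : IntervalIntegrable
        (fun y : ℝ => E y * (Complex.I*c*(y:ℂ) * f₁ y)) volume (-1) 1 :=
      (hEc.mul ((continuous_const.mul Complex.continuous_ofReal).mul
        hf₁c)).intervalIntegrable _ _
    have hint3 : IntervalIntegrable (fun y : ℝ => E y * ψ y) volume (-1) 1 :=
      (hEc.mul hψ.continuous).intervalIntegrable _ _
    have e1 : Fc c f₁ x = ∫ y in (-1:ℝ)..1, E y * f₁ y := rfl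
    have e2 : Fc c ψ x = ∫ y in (-1:ℝ)..1, E y * ψ y := rfl
    rw [e1, e2, ← intervalIntegral.integral_const_mul, ← intervalIntegral.integral_const_mul,
      ← intervalIntegral.integral_const_mul,
      ← intervalIntegral.integral_add (hint1.const_mul _) (hint2.const_mul _),
      ← intervalIntegral.integral_sub ((hint1.const_mul _).add (hint2.const_mul _))
        (hint3.const_mul _)]
  rw [hLHS, hRHS]
  apply intervalIntegral.integral_congr
  intro y _
  simp only []
  have hI : (Complex.I)^2 = -1 := Complex.I_sq
  simp only [hf₁]
  linear_combination ((c:ℂ)^2*((x:ℂ)^2-(y:ℂ)^2) * (E y * ψ y)) * hI
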